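/- Let k be a field of characteristic 2 and let D be the k-derivation on k[x_0,y_0,x_1,y_1] with D(x_i) = 0 and D(y_i) = x_i for i = 0,1. Then the invariant ring k[x_0,y_0,x_1,y_1]^D equals k[x_0, y_0^2, x_1, y_1^2, x_0 y_1 + x_1 y_0], and is isomorphic to k[V,W,X,Y,Z]/(Z^2 + V^2 Y + X^2 W) via V ↦ x_0, W ↦ y_0^2, X ↦ x_1, Y ↦ y_1^2, Z ↦ x_0 y_1 + x_1 y_0. -/

import Mathlib

open MvPolynomial

/-- The invariant subalgebra `R^D = ker D` of a derivation. -/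
def invariants {k : Type*} [CommRing k] {d : ℕ}
    (D : Derivation k (MvPolynomial (Fin d) k) (MvPolynomial (Fin d) k)) :
    Subalgebra k (MvPolynomial (Fin d) k) where
  carrier := {f | D f = 0}
  mul_mem' := by
    intro a b ha hb
    simp only [Set.mem_setOf_eq] at ha hb ⊢
    rw [Derivation.leibniz, ha, hb, smul_zero, smul_zero, add_zero]
  add_mem' := by
    intro a b ha hb
    simp only [Set.mem_setOf_eq] at ha hb ⊢
    rw [map_add, ha, hb, add_zero]
  algebraMap_mem' := fun r => by
    simp only [Set.mem_setOf_eq, Derivation.map_algebraMap]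

/-- The derivation on `k[x₀,y₀,x₁,y₁]` (variables indexed `0,1,2,3` as `x₀,y₀,x₁,y₁`)
with `D xᵢ = 0`, `D yᵢ = xᵢ`. -/
noncomputable def D7 (k : Type*) [CommRing k] :
    Derivation k (MvPolynomial (Fin 4) k) (MvPolynomial (Fin 4) k) :=
  MvPolynomial.mkDerivation k ![0, X 0, 0, X 2]

section Aux

variable {k : Type*} [Field k]

lemma mem_invariants {d : ℕ}
    {D : Derivation k (MvPolynomial (Fin d) k) (MvPolynomial (Fin d) k)}
    {f : MvPolynomial (Fin d) k} : f ∈ invariants D ↔ D f = 0 := Iff.rfl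

/-- the map `x₀ ↦ x₀, y₀ ↦ y₀², x₁ ↦ x₁, y₁ ↦ y₁²`. -/
noncomputable def gg (k : Type*) [Field k] :
    MvPolynomial (Fin 4) k →ₐ[k] MvPolynomial (Fin 4) k :=
  aeval ![X 0, X 1 ^ 2, X 2, X 3 ^ 2]

lemma gg_X0 : gg k (X 0) = X 0 := by simp [gg]
lemma gg_X1 : gg k (X 1) = X 1 ^ 2 := by simp [gg]
lemma gg_X2 : gg k (X 2) = X 2 := by simp [gg]
lemma gg_X3 : gg k (X 3) = X 3 ^ 2 := by simp [gg]

noncomputable def ee (u : Fin 4 →₀ ℕ) : Fin 4 →₀ ℕ :=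
  Finsupp.equivFunOnFinite.symm (fun i => if i = 1 ∨ i = 3 then 2 * u i else u i)

lemma ee_apply (u : Fin 4 →₀ ℕ) (i : Fin 4) :
    ee u i = if i = 1 ∨ i = 3 then 2 * u i else u i := rfl

lemma ee_inj : Function.Injective ee := by
  intro u v h
  ext i
  have := congrArg (fun w => w i) h
  simp only [ee_apply] at this
  split at this <;> omega

lemma gg_monomial (u : Fin 4 →₀ ℕ) (r : k) :
    gg k (monomial u r) = monomial (ee u) r := by
  rw [gg, aeval_monomial, monomial_eq, algebraMap_eq]
  congr 1
  have hsupp : (ee u).support = u.support := by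
    ext i
    simp only [Finsupp.mem_support_iff, ee_apply]
    split <;> omega
  rw [Finsupp.prod, Finsupp.prod, hsupp]
  apply Finset.prod_congr rfl
  intro n _
  fin_cases n <;> simp [ee_apply, pow_mul]

lemma gg_coeff (a : MvPolynomial (Fin 4) k) (u : Fin 4 →₀ ℕ) :
    coeff (ee u) (gg k a) = coeff u a := by
  induction a using MvPolynomial.induction_on' with
  | monomial v r =>
      rw [gg_monomial, coeff_monomial, coeff_monomial]
      by_cases h : v = u
      · simp [h]
      · rw [if_neg (fun hc => h (ee_inj hc)), if_neg h]
  | add p q hp hq => simp [map_add, coeff_add, hp, hq]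

lemma gg_eq_zero {a : MvPolynomial (Fin 4) k} (h : gg k a = 0) : a = 0 := by
  ext u
  rw [← gg_coeff, h]
  simp

lemma gg_mem {S : Subalgebra k (MvPolynomial (Fin 4) k)} (h0 : X 0 ∈ S) (h1 : X 1 ^ 2 ∈ S)
    (h2 : X 2 ∈ S) (h3 : X 3 ^ 2 ∈ S) (a : MvPolynomial (Fin 4) k) : gg k a ∈ S := by
  have hmem : gg k a ∈ (aeval (R := k) ![X 0, X 1 ^ 2, X 2, X 3 ^ 2]).range := ⟨a, rfl⟩
  rw [← Algebra.adjoin_range_eq_range_aeval] at hmem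
  refine Algebra.adjoin_le ?_ hmem
  rintro x ⟨i, rfl⟩
  fin_cases i <;> simpa

variable [CharP k 2]

lemma pderiv_gg (i : Fin 4) (hi : i = 1 ∨ i = 3) (a : MvPolynomial (Fin 4) k) :
    pderiv i (gg k a) = 0 := by
  induction a using MvPolynomial.induction_on with
  | C r => simp [gg]
  | add p q hp hq => simp [map_add, hp, hq]
  | mul_X p n hp =>
      rw [map_mul, Derivation.leibniz, hp, smul_zero, add_zero, smul_eq_mul]
      fin_cases n <;> rcases hi with rfl | rfl <;>
        simp [gg, Derivation.leibniz, pderiv_X, smul_eq_mul, Finsupp.single_apply,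
          CharTwo.add_self_eq_zero, CharTwo.two_eq_zero, mul_comm]

lemma key {a b c d : MvPolynomial (Fin 4) k}
    (h : gg k a + gg k b * X 1 + gg k c * X 3 + gg k d * (X 1 * X 3) = 0) :
    a = 0 ∧ b = 0 ∧ c = 0 ∧ d = 0 := by
  have p13 : (pderiv (1 : Fin 4)) (X (3 : Fin 4) : MvPolynomial (Fin 4) k) = 0 := by
    rw [pderiv_X_of_ne]; decide
  have p31 : (pderiv (3 : Fin 4)) (X (1 : Fin 4) : MvPolynomial (Fin 4) k) = 0 := by
    rw [pderiv_X_of_ne]; decide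
  have h1 := congrArg (pderiv (1 : Fin 4)) h
  simp only [map_add, Derivation.leibniz, pderiv_gg 1 (Or.inl rfl), pderiv_X_self, p13,
    smul_zero, smul_eq_mul, mul_one, add_zero, zero_add, map_zero, mul_zero] at h1
  have h3 := congrArg (pderiv (3 : Fin 4)) h
  simp only [map_add, Derivation.leibniz, pderiv_gg 3 (Or.inr rfl), pderiv_X_self, p31,
    smul_zero, smul_eq_mul, mul_one, add_zero, zero_add, map_zero, mul_zero] at h3
  have h13 := congrArg (pderiv (3 : Fin 4)) h1
  simp only [map_add, Derivation.leibniz, pderiv_gg 3 (Or.inr rfl), pderiv_X_self,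
    smul_zero, smul_eq_mul, mul_one, add_zero, zero_add, map_zero, mul_zero] at h13
  have hd : d = 0 := gg_eq_zero h13
  subst hd
  simp only [map_zero, zero_mul, add_zero] at h1 h3 h
  have hb : b = 0 := gg_eq_zero h1
  have hc : c = 0 := gg_eq_zero h3
  subst hb; subst hc
  simp only [map_zero, zero_mul, add_zero] at h
  exact ⟨gg_eq_zero h, rfl, rfl, rfl⟩

lemma rep (f : MvPolynomial (Fin 4) k) :
    ∃ a b c d, f = gg k a + gg k b * X 1 + gg k c * X 3 + gg k d * (X 1 * X 3) := by
  induction f using MvPolynomial.induction_on with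
  | C r => exact ⟨C r, 0, 0, 0, by simp [gg]⟩
  | add p q hp hq =>
      obtain ⟨a, b, c, d, rfl⟩ := hp
      obtain ⟨a', b', c', d', rfl⟩ := hq
      exact ⟨a + a', b + b', c + c', d + d', by simp only [map_add]; ring⟩
  | mul_X p n hp =>
      obtain ⟨a, b, c, d, rfl⟩ := hp
      fin_cases n <;>
        simp only [show ((⟨0, by omega⟩ : Fin 4)) = 0 from rfl,
          show ((⟨1, by omega⟩ : Fin 4)) = 1 from rfl,
          show ((⟨2, by omega⟩ : Fin 4)) = 2 from rfl,
          show ((⟨3, by omega⟩ : Fin 4)) = 3 from rfl]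
      · exact ⟨X 0 * a, X 0 * b, X 0 * c, X 0 * d, by
          simp only [map_mul, gg_X0]; ring⟩
      · exact ⟨X 1 * b, a, X 1 * d, c, by
          simp only [map_mul, gg_X1]; ring⟩
      · exact ⟨X 2 * a, X 2 * b, X 2 * c, X 2 * d, by
          simp only [map_mul, gg_X2]; ring⟩
      · exact ⟨X 3 * c, X 3 * d, a, b, by
          simp only [map_mul, gg_X3]; ring⟩

lemma prime_X2 : Prime (X 2 : MvPolynomial (Fin 4) k) := by
  rw [← MulEquiv.prime_iff ((renameEquiv k (Equiv.swap (2 : Fin 4) 0)).trans (finSuccEquiv k 3)).toMulEquiv]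
  have : ((renameEquiv k (Equiv.swap (2 : Fin 4) 0)).trans (finSuccEquiv k 3)).toMulEquiv (X 2)
      = (Polynomial.X : Polynomial (MvPolynomial (Fin 3) k)) := by
    simp [Equiv.swap_apply_left, finSuccEquiv_X_zero]
  rw [this]
  exact Polynomial.prime_X

lemma not_X2_dvd_X0 : ¬ (X 2 ∣ (X 0 : MvPolynomial (Fin 4) k)) := by
  rintro ⟨t, ht⟩
  have := congrArg (eval (fun i : Fin 4 => if i = 0 then (1 : k) else 0)) ht
  simp at this

lemma D7_X0 : D7 k (X 0) = 0 := by simp [D7, mkDerivation_X]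
lemma D7_X1 : D7 k (X 1) = X 0 := by simp [D7, mkDerivation_X]
lemma D7_X2 : D7 k (X 2) = 0 := by simp [D7, mkDerivation_X]
lemma D7_X3 : D7 k (X 3) = X 2 := by simp [D7, mkDerivation_X]

lemma gg_inv (a : MvPolynomial (Fin 4) k) : D7 k (gg k a) = 0 := by
  refine gg_mem ?_ ?_ ?_ ?_ a (S := invariants (D7 k)) <;> rw [mem_invariants]
  · exact D7_X0
  · rw [pow_two, Derivation.leibniz, D7_X1, smul_eq_mul]
    exact CharTwo.add_self_eq_zero _
  · exact D7_X2
  · rw [pow_two, Derivation.leibniz, D7_X3, smul_eq_mul]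
    exact CharTwo.add_self_eq_zero _

lemma partA :
    invariants (D7 k) =
      Algebra.adjoin k
        {X 0, (X 1 : MvPolynomial (Fin 4) k) ^ 2, X 2, (X 3) ^ 2, X 0 * X 3 + X 2 * X 1} := by
  apply le_antisymm
  · intro f hf
    rw [mem_invariants] at hf
    obtain ⟨a, b, c, d, rfl⟩ := rep f
    -- compute the derivation
    have hD : gg k (X 0 * b + X 2 * c) + gg k (X 2 * d) * X 1 + gg k (X 0 * d) * X 3
        + gg k 0 * (X 1 * X 3) = 0 := by
      rw [map_zero, zero_mul, add_zero, ← hf]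
      simp only [map_add, map_mul, Derivation.leibniz, gg_inv, smul_zero, smul_eq_mul,
        add_zero, zero_add, D7_X1, D7_X3, gg_X0, gg_X2, map_zero, zero_mul, mul_zero]
      ring
    obtain ⟨hbc, hd2, hd0, -⟩ := key hD
    have hd : d = 0 := by
      rcases mul_eq_zero.1 hd0 with h | h
      · exact absurd h (X_ne_zero 0)
      · exact h
    subst hd
    have hbc' : X 0 * b = X 2 * c := by
      rw [← CharTwo.sub_eq_add, sub_eq_zero] at hbc
      exact hbc
    obtain ⟨t, rfl⟩ : (X 2 : MvPolynomial (Fin 4) k) ∣ b := by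
      rcases (prime_X2.2.2 (X 0) b ⟨c, hbc'⟩) with h | h
      · exact absurd h not_X2_dvd_X0
      · exact h
    have hc : c = X 0 * t := by
      apply mul_left_cancel₀ (X_ne_zero (R := k) (σ := Fin 4) 2)
      rw [← hbc']; ring
    subst hc
    have hmem : ∀ p : MvPolynomial (Fin 4) k, gg k p ∈ Algebra.adjoin k
        ({X 0, (X 1 : MvPolynomial (Fin 4) k) ^ 2, X 2, (X 3) ^ 2, X 0 * X 3 + X 2 * X 1} :
          Set (MvPolynomial (Fin 4) k)) := by
      intro p
      refine gg_mem ?_ ?_ ?_ ?_ p <;> apply Algebra.subset_adjoin <;> simp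
    have hs : (X 0 * X 3 + X 2 * X 1 : MvPolynomial (Fin 4) k) ∈ Algebra.adjoin k
        ({X 0, (X 1 : MvPolynomial (Fin 4) k) ^ 2, X 2, (X 3) ^ 2, X 0 * X 3 + X 2 * X 1} :
          Set (MvPolynomial (Fin 4) k)) := by
      apply Algebra.subset_adjoin; simp
    have heq : gg k a + gg k (X 2 * t) * X 1 + gg k (X 0 * t) * X 3 + gg k 0 * (X 1 * X 3)
        = gg k a + gg k t * (X 0 * X 3 + X 2 * X 1) := by
      simp only [map_mul, gg_X0, gg_X2, map_zero, zero_mul]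
      ring
    rw [heq]
    exact add_mem (hmem a) (mul_mem (hmem t) hs)
  · apply Algebra.adjoin_le
    intro x hx
    simp only [Set.mem_insert_iff, Set.mem_singleton_iff] at hx
    rw [SetLike.mem_coe, mem_invariants]
    rcases hx with rfl | rfl | rfl | rfl | rfl
    · exact D7_X0
    · rw [pow_two, Derivation.leibniz, D7_X1, smul_eq_mul]
      exact CharTwo.add_self_eq_zero _
    · exact D7_X2
    · rw [pow_two, Derivation.leibniz, D7_X3, smul_eq_mul]
      exact CharTwo.add_self_eq_zero _
    · simp only [map_add, Derivation.leibniz, D7_X0, D7_X1, D7_X2, D7_X3, smul_zero,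
        smul_eq_mul, add_zero, zero_add, mul_zero]
      rw [mul_comm, CharTwo.add_self_eq_zero]

noncomputable def pp (k : Type*) [Field k] : MvPolynomial (Fin 5) k :=
  (X 4) ^ 2 + (X 0) ^ 2 * X 3 + (X 2) ^ 2 * X 1

noncomputable def ff (k : Type*) [Field k] :
    MvPolynomial (Fin 5) k →ₐ[k] MvPolynomial (Fin 4) k :=
  aeval ![X 0, X 1 ^ 2, X 2, X 3 ^ 2, X 0 * X 3 + X 2 * X 1]

omit [CharP k 2] in lemma ff_X0 : ff k (X 0) = X 0 := by simp [ff]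
omit [CharP k 2] in lemma ff_X1 : ff k (X 1) = X 1 ^ 2 := by simp [ff]
omit [CharP k 2] in lemma ff_X2 : ff k (X 2) = X 2 := by simp [ff]
omit [CharP k 2] in lemma ff_X3 : ff k (X 3) = X 3 ^ 2 := by simp [ff]
omit [CharP k 2] in lemma ff_X4 : ff k (X 4) = X 0 * X 3 + X 2 * X 1 := by simp [ff]

omit [CharP k 2] in
lemma ff_rename (a : MvPolynomial (Fin 4) k) :
    ff k (rename Fin.castSucc a) = gg k a := by
  have hfun : (![X 0, X 1 ^ 2, X 2, X 3 ^ 2, X 0 * X 3 + X 2 * X 1] ∘ Fin.castSucc :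
      Fin 4 → MvPolynomial (Fin 4) k) = ![X 0, X 1 ^ 2, X 2, X 3 ^ 2] := by
    funext i
    fin_cases i <;> rfl
  rw [ff, aeval_rename, hfun, gg]

lemma ff_pp : ff k (pp k) = 0 := by
  have h2 : (2 : MvPolynomial (Fin 4) k) = 0 := CharTwo.two_eq_zero
  simp only [pp, map_add, map_mul, map_pow, ff_X0, ff_X1, ff_X2, ff_X3, ff_X4]
  linear_combination (X 0 ^ 2 * X 3 ^ 2 + X 2 ^ 2 * X 1 ^ 2 + X 0 * X 3 * X 2 * X 1 :
    MvPolynomial (Fin 4) k) * h2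

lemma rep5 (f : MvPolynomial (Fin 5) k) :
    ∃ q a b, f = q * pp k + rename Fin.castSucc a + rename Fin.castSucc b * X 4 := by
  have h2 : (2 : MvPolynomial (Fin 5) k) = 0 := CharTwo.two_eq_zero
  induction f using MvPolynomial.induction_on with
  | C r => exact ⟨0, C r, 0, by simp⟩
  | add p q hp hq =>
      obtain ⟨q1, a1, b1, rfl⟩ := hp
      obtain ⟨q2, a2, b2, rfl⟩ := hq
      exact ⟨q1 + q2, a1 + a2, b1 + b2, by simp only [map_add]; ring⟩
  | mul_X p n hp =>
      obtain ⟨q, a, b, rfl⟩ := hp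
      fin_cases n <;>
        simp only [show ((⟨0, by omega⟩ : Fin 5)) = 0 from rfl,
          show ((⟨1, by omega⟩ : Fin 5)) = 1 from rfl,
          show ((⟨2, by omega⟩ : Fin 5)) = 2 from rfl,
          show ((⟨3, by omega⟩ : Fin 5)) = 3 from rfl,
          show ((⟨4, by omega⟩ : Fin 5)) = 4 from rfl]
      · refine ⟨q * X 0, X 0 * a, X 0 * b, ?_⟩
        simp only [map_mul, rename_X, show (Fin.castSucc (0 : Fin 4)) = (0 : Fin 5) from rfl]
        ring
      · refine ⟨q * X 1, X 1 * a, X 1 * b, ?_⟩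
        simp only [map_mul, rename_X, show (Fin.castSucc (1 : Fin 4)) = (1 : Fin 5) from rfl]
        ring
      · refine ⟨q * X 2, X 2 * a, X 2 * b, ?_⟩
        simp only [map_mul, rename_X, show (Fin.castSucc (2 : Fin 4)) = (2 : Fin 5) from rfl]
        ring
      · refine ⟨q * X 3, X 3 * a, X 3 * b, ?_⟩
        simp only [map_mul, rename_X, show (Fin.castSucc (3 : Fin 4)) = (3 : Fin 5) from rfl]
        ring
      · refine ⟨q * X 4 + rename Fin.castSucc b, b * ((X 0) ^ 2 * X 3 + (X 2) ^ 2 * X 1), a, ?_⟩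
        simp only [map_mul, map_add, map_pow, rename_X, pp,
          show (Fin.castSucc (0 : Fin 4)) = (0 : Fin 5) from rfl,
          show (Fin.castSucc (1 : Fin 4)) = (1 : Fin 5) from rfl,
          show (Fin.castSucc (2 : Fin 4)) = (2 : Fin 5) from rfl,
          show (Fin.castSucc (3 : Fin 4)) = (3 : Fin 5) from rfl]
        linear_combination (-(rename (Fin.castSucc (n := 4)) b *
          ((X 0) ^ 2 * X 3 + (X 2) ^ 2 * X 1)) : MvPolynomial (Fin 5) k) * h2

lemma ker_ff : RingHom.ker (ff k).toRingHom = Ideal.span {pp k} := by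
  ext f
  rw [RingHom.mem_ker, Ideal.mem_span_singleton]
  constructor
  · intro hf
    obtain ⟨q, a, b, rfl⟩ := rep5 f
    simp only [AlgHom.toRingHom_eq_coe, RingHom.coe_coe, map_add, map_mul, ff_pp, mul_zero,
      zero_add, ff_rename, ff_X4] at hf
    have h0 : gg k a + gg k (X 2 * b) * X 1 + gg k (X 0 * b) * X 3 + gg k 0 * (X 1 * X 3) = 0 := by
      rw [map_zero, zero_mul, add_zero]
      simp only [map_mul, gg_X0, gg_X2]
      rw [ff_X4] at hf
      linear_combination hf
    obtain ⟨ha, hb2, -, -⟩ := key h0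
    have hb : b = 0 := by
      rcases mul_eq_zero.1 hb2 with h | h
      · exact absurd h (X_ne_zero _)
      · exact h
    subst ha; subst hb
    exact ⟨q, by simp [mul_comm]⟩
  · rintro ⟨t, rfl⟩
    simp only [AlgHom.toRingHom_eq_coe, RingHom.coe_coe, map_mul, ff_pp, zero_mul]

lemma range_ff : (ff k).range = invariants (D7 k) := by
  rw [partA, ff, ← Algebra.adjoin_range_eq_range_aeval]
  congr 1
  ext x
  simp only [Set.mem_range, Set.mem_insert_iff, Set.mem_singleton_iff]
  constructor
  · rintro ⟨i, rfl⟩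
    fin_cases i <;> simp
  · rintro (rfl | rfl | rfl | rfl | rfl)
    exacts [⟨0, rfl⟩, ⟨1, rfl⟩, ⟨2, rfl⟩, ⟨3, rfl⟩, ⟨4, rfl⟩]

end Aux

theorem stmt7 (k : Type*) [Field k] [CharP k 2] :
    invariants (D7 k) =
      Algebra.adjoin k
        {X 0, (X 1) ^ 2, X 2, (X 3) ^ 2, X 0 * X 3 + X 2 * X 1} ∧
    ∃ φ : MvPolynomial (Fin 5) k →ₐ[k] MvPolynomial (Fin 4) k,
      φ (X 0) = X 0 ∧ φ (X 1) = (X 1) ^ 2 ∧ φ (X 2) = X 2 ∧ φ (X 3) = (X 3) ^ 2 ∧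
      φ (X 4) = X 0 * X 3 + X 2 * X 1 ∧
      RingHom.ker φ.toRingHom =
        Ideal.span {(X 4) ^ 2 + (X 0) ^ 2 * X 3 + (X 2) ^ 2 * X 1} ∧
      φ.range = invariants (D7 k) := by
  exact ⟨partA, ff k, ff_X0, ff_X1, ff_X2, ff_X3, ff_X4, ker_ff, range_ff⟩
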